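/- Let V be a standard Borel space, P a Markov kernel on V, η* an invariant probability measure for P, and λ a probability measure on V such that the mean ergodic Cesàro convergence holds at the level of one-dimensional marginals: for every bounded measurable g : V → ℝ, (1/T) Σ_{k=0}^{T−1} ∫ g d(λP^k) → ∫ g dη* as T → ∞. Then the Cesàro convergence extends to all finite-dimensional cylinder events of the path process: for every m ≥ 0 and every measurable set A ⊆ V^{m+1}, lim_{T→∞} (1/T) Σ_{k=0}^{T−1} ℙ_λ{ω : (ω_k, ω_{k+1}, …, ω_{k+m}) ∈ A} = ℙ_{η*}{ω : (ω_0, ω_1, …, ω_m) ∈ A}; equivalently, (1/T) Σ_{k=0}^{T−1} ℙ_λ(θ^{−k}B) → ℙ_{η*}(B) for every measurable cylinder set B ⊆ V^ℕ depending on finitely many coordinates. -/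

import Mathlib

open MeasureTheory ProbabilityTheory Filter
open scoped ENNReal NNReal

/-- The `k`-fold iterate `λP^k` of a probability measure under a Markov kernel. -/
noncomputable def iterBind {V : Type*} [MeasurableSpace V] (P : Kernel V V)
    (lam : Measure V) (k : ℕ) : Measure V :=
  (fun m : Measure V => m.bind ⇑P)^[k] lam

/-- The law of `(ω_0, …, ω_n)` for the Markov chain with transition kernel `P` and
initial distribution `lam`: `finLaw P lam 0 = lam` and
`finLaw P lam (n+1) = (finLaw P lam n) ⊗ P` (the next coordinate drawn from `P` applied
to the last coordinate). -/
noncomputable def finLaw {V : Type*} [MeasurableSpace V] (P : Kernel V V)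
    (lam : Measure V) : (n : ℕ) → Measure (Fin (n + 1) → V)
  | 0 => lam.map (fun v _ => v)
  | n + 1 =>
      ((finLaw P lam n) ⊗ₘ (P.comap (fun ω => ω (Fin.last n)) (measurable_pi_apply _))).map
        (fun p => Fin.snoc p.1 p.2)

section Aux
variable {V : Type*} [MeasurableSpace V]

lemma measurable_snoc' {n : ℕ} :
    Measurable (fun p : ((Fin n → V) × V) => (Fin.snoc p.1 p.2 : Fin (n + 1) → V)) := by
  apply measurable_pi_lambda
  intro i
  induction i using Fin.lastCases with
  | last => simpa using measurable_snd
  | cast j => simpa [Function.comp_def] using (measurable_pi_apply j).comp measurable_fst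

variable (P : Kernel V V) [IsMarkovKernel P]

noncomputable def finKer : (n : ℕ) → Kernel V (Fin (n + 1) → V)
  | 0 => Kernel.deterministic (fun v (_ : Fin 1) => v)
      (measurable_pi_lambda _ fun _ => measurable_id)
  | n + 1 => Kernel.map
      ((finKer n) ⊗ₖ (Kernel.prodMkLeft V
        (P.comap (fun ω : Fin (n + 1) → V => ω (Fin.last n)) (measurable_pi_apply _))))
      (fun p => Fin.snoc p.1 p.2)

instance finKer_markov : ∀ n : ℕ, IsMarkovKernel (finKer P n)
  | 0 => by unfold finKer; infer_instance
  | n + 1 => by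
      haveI := finKer_markov n
      unfold finKer
      exact Kernel.IsMarkovKernel.map _ measurable_snoc'

end Aux

lemma isProb_bind {α β : Type*} [MeasurableSpace α] [MeasurableSpace β]
    (P : Kernel α β) [IsMarkovKernel P] (lam : Measure α) [IsProbabilityMeasure lam] :
    IsProbabilityMeasure (lam.bind ⇑P) :=
  ⟨by rw [Measure.bind_apply MeasurableSet.univ P.measurable.aemeasurable]; simp⟩

section Aux2
variable {V : Type*} [MeasurableSpace V] (P : Kernel V V) [IsMarkovKernel P]

lemma bind_kernel_map {α β γ : Type*} [MeasurableSpace α] [MeasurableSpace β] [MeasurableSpace γ]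
    (μ : Measure α) (κ : Kernel α β) [IsSFiniteKernel κ] {f : β → γ} (hf : Measurable f) :
    μ.bind ⇑(Kernel.map κ f) = (μ.bind ⇑κ).map f := by
  ext s hs
  rw [Measure.map_apply hf hs, Measure.bind_apply (hf hs) κ.measurable.aemeasurable,
    Measure.bind_apply hs (Kernel.map κ f).measurable.aemeasurable]
  refine lintegral_congr fun a => ?_
  rw [Kernel.map_apply _ hf, Measure.map_apply hf hs]

lemma bind_compProd {α β γ : Type*} [MeasurableSpace α] [MeasurableSpace β] [MeasurableSpace γ]
    (μ : Measure α) [IsProbabilityMeasure μ] (κ : Kernel α β) [IsMarkovKernel κ]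
    (η : Kernel β γ) [IsMarkovKernel η] :
    μ.bind ⇑(κ ⊗ₖ (Kernel.prodMkLeft α η)) = (μ.bind ⇑κ) ⊗ₘ η := by
  haveI : IsProbabilityMeasure (μ.bind ⇑κ) := isProb_bind κ μ
  ext s hs
  rw [Measure.compProd_apply hs, Measure.bind_apply hs (κ ⊗ₖ _).measurable.aemeasurable,
    Measure.lintegral_bind κ.measurable.aemeasurable
      (Kernel.measurable_kernel_prodMk_left hs).aemeasurable]
  refine lintegral_congr fun a => ?_
  rw [Kernel.compProd_apply hs]
  exact lintegral_congr fun b => rfl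

lemma finLaw_eq_bind (lam : Measure V) [IsProbabilityMeasure lam] :
    ∀ n : ℕ, finLaw P lam n = lam.bind ⇑(finKer P n)
  | 0 => by
      rw [finLaw, finKer]
      exact (Measure.bind_dirac_eq_map lam (measurable_pi_lambda _ fun _ => measurable_id)).symm
  | n + 1 => by
      rw [finLaw, finKer, bind_kernel_map _ _ measurable_snoc', bind_compProd,
        finLaw_eq_bind lam n]

instance finLaw_prob (lam : Measure V) [IsProbabilityMeasure lam] (n : ℕ) :
    IsProbabilityMeasure (finLaw P lam n) := by
  rw [finLaw_eq_bind]
  exact isProb_bind _ lam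

end Aux2
section Aux3
variable {V : Type*} [MeasurableSpace V] (P : Kernel V V) [IsMarkovKernel P]

lemma map_compProd' {α β γ : Type*} [MeasurableSpace α] [MeasurableSpace β] [MeasurableSpace γ]
    (μ : Measure α) [IsProbabilityMeasure μ] {f : α → β} (hf : Measurable f)
    (ξ : Kernel α γ) [IsMarkovKernel ξ] (η : Kernel β γ) [IsMarkovKernel η]
    (hξ : ∀ a, ξ a = η (f a)) :
    (μ ⊗ₘ ξ).map (Prod.map f id) = (μ.map f) ⊗ₘ η := by
  haveI : IsProbabilityMeasure (μ.map f) := Measure.isProbabilityMeasure_map hf.aemeasurable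
  ext s hs
  rw [Measure.map_apply (hf.prodMap measurable_id) hs,
    Measure.compProd_apply ((hf.prodMap measurable_id) hs),
    Measure.compProd_apply hs,
    lintegral_map (Kernel.measurable_kernel_prodMk_left hs) hf]
  refine lintegral_congr fun a => ?_
  rw [hξ a]
  rfl

/-- measurability of coordinate-reindexing maps -/
lemma measurable_reindex {n m : ℕ} (g : Fin (m + 1) → Fin (n + 1)) :
    Measurable (fun x : Fin (n + 1) → V => fun i => x (g i)) :=
  measurable_pi_lambda _ fun i => measurable_pi_apply _

lemma finLaw_tail (lam : Measure V) [IsProbabilityMeasure lam] :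
    ∀ n : ℕ, (finLaw P lam (n + 1)).map (fun x (i : Fin (n + 1)) => x i.succ)
      = finLaw P (lam.bind ⇑P) n
  | 0 => by
      haveI : IsProbabilityMeasure (lam.bind ⇑P) := isProb_bind P lam
      haveI : IsProbabilityMeasure (lam.map (fun v (_ : Fin 1) => v)) :=
        Measure.isProbabilityMeasure_map (measurable_pi_lambda _ fun _ => measurable_id).aemeasurable
      rw [finLaw, finLaw, Measure.map_map (measurable_reindex _) measurable_snoc']
      have hfun : ((fun (x : Fin 2 → V) (i : Fin 1) => x i.succ) ∘ fun p : (Fin 1 → V) × V => Fin.snoc p.1 p.2)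
          = fun p (_ : Fin 1) => p.2 := by
        funext p i
        have h : i = 0 := Subsingleton.elim i 0
        subst h
        show (Fin.snoc p.1 p.2 : Fin 2 → V) (Fin.last 1) = p.2
        rw [Fin.snoc_last]
      rw [hfun, finLaw]
      ext s hs
      have hc : Measurable (fun v : V => (fun _ : Fin 1 => v)) :=
        measurable_pi_lambda _ fun _ => measurable_id
      have hp2 : Measurable (fun p : (Fin 1 → V) × V => (fun _ : Fin 1 => p.2)) :=
        measurable_pi_lambda _ fun _ => measurable_snd
      rw [Measure.map_apply hp2 hs, Measure.compProd_apply (hp2 hs),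
        Measure.map_apply hc hs, Measure.bind_apply (hc hs) P.measurable.aemeasurable,
        lintegral_map (Kernel.measurable_kernel_prodMk_left (hp2 hs)) hc]
      refine lintegral_congr fun v => ?_
      rw [Kernel.comap_apply]
      rfl
  | n + 1 => by
      haveI : IsProbabilityMeasure (lam.bind ⇑P) := isProb_bind P lam
      rw [finLaw, Measure.map_map (measurable_reindex _) measurable_snoc']
      have hfun : ((fun (x : Fin (n + 3) → V) (i : Fin (n + 2)) => x i.succ)
            ∘ fun p : (Fin (n + 2) → V) × V => Fin.snoc p.1 p.2)
          = (fun p : (Fin (n + 1) → V) × V => (Fin.snoc p.1 p.2 : Fin (n + 2) → V))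
            ∘ (Prod.map (fun x (i : Fin (n + 1)) => x i.succ) id) := by
        funext p i
        simp only [Function.comp_apply, Prod.map_apply, id]
        induction i using Fin.lastCases with
        | last =>
            rw [Fin.succ_last]
            simp [Prod.map]
        | cast j =>
            rw [Fin.succ_castSucc, Fin.snoc_castSucc]
            simp [Prod.map]
      rw [hfun, ← Measure.map_map measurable_snoc'
        ((measurable_reindex (V := V) (fun i : Fin (n + 1) => i.succ)).prodMap measurable_id)]
      have hxik : ∀ x : Fin (n + 2) → V,
          (P.comap (fun ω : Fin (n + 2) → V => ω (Fin.last (n + 1))) (measurable_pi_apply _)) x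
          = (P.comap (fun ω : Fin (n + 1) → V => ω (Fin.last n)) (measurable_pi_apply _))
              ((fun (x : Fin (n + 2) → V) (i : Fin (n + 1)) => x i.succ) x) := by
        intro x
        simp only [Kernel.comap_apply, Fin.succ_last]
      rw [map_compProd' _ (measurable_reindex (fun i : Fin (n + 1) => i.succ)) _ _ hxik,
        finLaw_tail lam n, finLaw]

lemma iterBind_succ (lam : Measure V) (k : ℕ) :
    iterBind P lam (k + 1) = iterBind P (lam.bind ⇑P) k := by
  simp only [iterBind, Function.iterate_succ_apply]

lemma iterBind_prob : ∀ (k : ℕ) (lam : Measure V) [IsProbabilityMeasure lam],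
    IsProbabilityMeasure (iterBind P lam k)
  | 0, lam, h => h
  | k + 1, lam, h => by
      rw [iterBind_succ]
      haveI : IsProbabilityMeasure (lam.bind ⇑P) := isProb_bind P lam
      exact iterBind_prob k (lam.bind ⇑P)

lemma finLaw_cast (lam : Measure V) [IsProbabilityMeasure lam] {a b : ℕ} (h : a = b)
    (h2 : b + 1 = a + 1) :
    (finLaw P lam a).map (fun x (i : Fin (b + 1)) => x (Fin.cast h2 i)) = finLaw P lam b := by
  subst h
  have : (fun (x : Fin (a + 1) → V) (i : Fin (a + 1)) => x (Fin.cast h2 i))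
      = id := by funext x i; rfl
  rw [this, Measure.map_id]

lemma finLaw_drop : ∀ (k n : ℕ) (lam : Measure V) [IsProbabilityMeasure lam],
    (finLaw P lam (k + n)).map
      (fun x (i : Fin (n + 1)) => x ⟨k + (i : ℕ), Nat.add_lt_add_left i.isLt k⟩)
      = finLaw P (iterBind P lam k) n
  | 0, n, lam, _ => by
      have hfun : (fun (x : Fin (0 + n + 1) → V) (i : Fin (n + 1)) =>
            x ⟨0 + (i : ℕ), Nat.add_lt_add_left i.isLt 0⟩)
          = fun x (i : Fin (n + 1)) => x (Fin.cast (by omega) i) := by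
        funext x i
        congr 1
        simp [Fin.ext_iff]
      rw [hfun, finLaw_cast P lam (by omega : 0 + n = n)]
      rfl
  | k + 1, n, lam, _ => by
      haveI : IsProbabilityMeasure (lam.bind ⇑P) := isProb_bind P lam
      have hC : Measurable (fun (x : Fin ((k + 1) + n + 1) → V)
          (i : Fin ((k + n + 1) + 1)) => x (Fin.cast (by omega) i)) :=
        measurable_pi_lambda _ fun i => measurable_pi_apply _
      have hT : Measurable (fun (x : Fin (k + n + 2) → V) (i : Fin (k + n + 1)) => x i.succ) :=
        measurable_pi_lambda _ fun i => measurable_pi_apply _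
      have hD : Measurable (fun (x : Fin (k + n + 1) → V) (i : Fin (n + 1)) =>
          x ⟨k + (i : ℕ), Nat.add_lt_add_left i.isLt k⟩) :=
        measurable_pi_lambda _ fun i => measurable_pi_apply _
      have hfun : (fun (x : Fin ((k + 1) + n + 1) → V) (i : Fin (n + 1)) =>
            x ⟨(k + 1) + (i : ℕ), Nat.add_lt_add_left i.isLt (k + 1)⟩)
          = (fun (x : Fin (k + n + 1) → V) (i : Fin (n + 1)) =>
              x ⟨k + (i : ℕ), Nat.add_lt_add_left i.isLt k⟩)
            ∘ ((fun (x : Fin (k + n + 2) → V) (i : Fin (k + n + 1)) => x i.succ)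
            ∘ (fun (x : Fin ((k + 1) + n + 1) → V)
                (i : Fin ((k + n + 1) + 1)) => x (Fin.cast (by omega) i))) := by
        funext x i
        show x _ = x _
        congr 1
        simp [Fin.ext_iff]
        omega
      rw [hfun, ← Measure.map_map hD (hT.comp hC), ← Measure.map_map hT hC,
        finLaw_cast P lam (by omega : (k + 1) + n = k + n + 1),
        finLaw_tail P lam (k + n), finLaw_drop k n (lam.bind ⇑P), ← iterBind_succ]

end Aux3

section Aux4
variable {V : Type*} [MeasurableSpace V] (P : Kernel V V) [IsMarkovKernel P]

lemma finLaw_apply_toReal (lam : Measure V) [IsProbabilityMeasure lam] (n : ℕ)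
    {A : Set (Fin (n + 1) → V)} (hA : MeasurableSet A) :
    ∫ v, ((finKer P n) v A).toReal ∂lam = ((finLaw P lam n) A).toReal := by
  rw [integral_toReal (((finKer P n).measurable_coe hA).aemeasurable)
      (ae_of_all _ fun v => measure_lt_top _ _),
    finLaw_eq_bind, Measure.bind_apply hA (finKer P n).measurable.aemeasurable]

theorem cesaro_cylinder_convergence'
    (η : Measure V) [IsProbabilityMeasure η]
    (lam : Measure V) [IsProbabilityMeasure lam]
    (hmean : ∀ g : V → ℝ, Measurable g → (∃ C : ℝ, ∀ v, |g v| ≤ C) →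
      Tendsto (fun T : ℕ => (1 / T : ℝ) * ∑ k ∈ Finset.range T, ∫ v, g v ∂(iterBind P lam k))
        atTop (nhds (∫ v, g v ∂η)))
    (Qlam : Measure (ℕ → V)) [IsProbabilityMeasure Qlam]
    (hQlam : ∀ n : ℕ, Qlam.map (fun ω (i : Fin (n + 1)) => ω (i : ℕ)) = finLaw P lam n)
    (Qeta : Measure (ℕ → V)) [IsProbabilityMeasure Qeta]
    (hQeta : ∀ n : ℕ, Qeta.map (fun ω (i : Fin (n + 1)) => ω (i : ℕ)) = finLaw P η n) :
    ∀ (m : ℕ) (A : Set (Fin (m + 1) → V)), MeasurableSet A →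
      Tendsto (fun T : ℕ => (1 / T : ℝ) * ∑ k ∈ Finset.range T,
          (Qlam {ω | (fun i : Fin (m + 1) => ω (k + (i : ℕ))) ∈ A}).toReal)
        atTop (nhds ((Qeta {ω | (fun i : Fin (m + 1) => ω (i : ℕ)) ∈ A}).toReal)) := by
  intro m A hA
  set g : V → ℝ := fun v => ((finKer P m) v A).toReal with hgdef
  have hg : Measurable g := ((finKer P m).measurable_coe hA).ennreal_toReal
  have hbd : ∀ v, |g v| ≤ 1 := by
    intro v
    rw [abs_of_nonneg ENNReal.toReal_nonneg]
    simpa using ENNReal.toReal_mono ENNReal.one_ne_top prob_le_one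
  have hterm : ∀ k : ℕ, (Qlam {ω | (fun i : Fin (m + 1) => ω (k + (i : ℕ))) ∈ A}).toReal
      = ∫ v, g v ∂(iterBind P lam k) := by
    intro k
    haveI := iterBind_prob P k lam
    have hproj : Measurable (fun ω : ℕ → V => fun j : Fin (k + m + 1) => ω (j : ℕ)) :=
      measurable_pi_lambda _ fun j => measurable_pi_apply _
    have hD : Measurable (fun (x : Fin (k + m + 1) → V) (i : Fin (m + 1)) =>
        x ⟨k + (i : ℕ), Nat.add_lt_add_left i.isLt k⟩) :=
      measurable_pi_lambda _ fun i => measurable_pi_apply _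
    have h1 : {ω : ℕ → V | (fun i : Fin (m + 1) => ω (k + (i : ℕ))) ∈ A}
        = (fun ω : ℕ → V => fun j : Fin (k + m + 1) => ω (j : ℕ)) ⁻¹'
          ((fun (x : Fin (k + m + 1) → V) (i : Fin (m + 1)) =>
            x ⟨k + (i : ℕ), Nat.add_lt_add_left i.isLt k⟩) ⁻¹' A) := rfl
    rw [hgdef, finLaw_apply_toReal P _ m hA, h1,
      ← Measure.map_apply hproj (hD hA), hQlam (k + m),
      ← Measure.map_apply hD hA, finLaw_drop]
  have hlim : (Qeta {ω | (fun i : Fin (m + 1) => ω (i : ℕ)) ∈ A}).toReal = ∫ v, g v ∂η := by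
    have hproj : Measurable (fun ω : ℕ → V => fun j : Fin (m + 1) => ω (j : ℕ)) :=
      measurable_pi_lambda _ fun j => measurable_pi_apply _
    have h1 : {ω : ℕ → V | (fun i : Fin (m + 1) => ω (i : ℕ)) ∈ A}
        = (fun ω : ℕ → V => fun j : Fin (m + 1) => ω (j : ℕ)) ⁻¹' A := rfl
    rw [hgdef, finLaw_apply_toReal P _ m hA, h1, ← Measure.map_apply hproj hA, hQeta m]
  have hmain := hmean g hg ⟨1, hbd⟩
  rw [hlim]
  refine hmain.congr fun T => ?_
  congr 1
  exact Finset.sum_congr rfl fun k _ => (hterm k).symm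

end Aux4

/-- if the Cesàro averages of the one-dimensional marginals of the chain
started from `lam` converge (in the mean ergodic sense) to those of an invariant
measure `η*`, then the Cesàro averages of all finite-dimensional cylinder events of the
path law `ℙ_lam` converge to the corresponding probabilities under the stationary path
law `ℙ_{η*}`. -/
theorem cesaro_cylinder_convergence
    {V : Type*} [MeasurableSpace V] [StandardBorelSpace V]
    (P : Kernel V V) [IsMarkovKernel P]
    (η : Measure V) [IsProbabilityMeasure η] (hη : η.bind ⇑P = η)
    (lam : Measure V) [IsProbabilityMeasure lam]
    (hmean : ∀ g : V → ℝ, Measurable g → (∃ C : ℝ, ∀ v, |g v| ≤ C) →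
      Tendsto (fun T : ℕ => (1 / T : ℝ) * ∑ k ∈ Finset.range T, ∫ v, g v ∂(iterBind P lam k))
        atTop (nhds (∫ v, g v ∂η)))
    (Qlam : Measure (ℕ → V)) [IsProbabilityMeasure Qlam]
    (hQlam : ∀ n : ℕ, Qlam.map (fun ω (i : Fin (n + 1)) => ω (i : ℕ)) = finLaw P lam n)
    (Qeta : Measure (ℕ → V)) [IsProbabilityMeasure Qeta]
    (hQeta : ∀ n : ℕ, Qeta.map (fun ω (i : Fin (n + 1)) => ω (i : ℕ)) = finLaw P η n) :
    ∀ (m : ℕ) (A : Set (Fin (m + 1) → V)), MeasurableSet A →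
      Tendsto (fun T : ℕ => (1 / T : ℝ) * ∑ k ∈ Finset.range T,
          (Qlam {ω | (fun i : Fin (m + 1) => ω (k + (i : ℕ))) ∈ A}).toReal)
        atTop (nhds ((Qeta {ω | (fun i : Fin (m + 1) => ω (i : ℕ)) ∈ A}).toReal)) :=
  cesaro_cylinder_convergence' P η lam hmean Qlam hQlam Qeta hQeta
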